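/- Let a = 1, b = 1, c = 1, d = -69/8. Set e = (24(1971 - 24√6423)^{1/3} - 8(1971 - 24√6423)^{2/3} + 24(1971 + 24√6423)^{1/3} - 8(1971 + 24√6423)^{2/3} - 1551)/576 and E₂ = (21 + 4(1971 - 24√6423)^{1/3} + 4(1971 + 24√6423)^{1/3})/24. Then ψ₂(x) = (1 - (E₂/2)·x²)·exp(-(1/6)x⁶ - (1/8)x⁴ - (3/16)x²) satisfies -ψ₂'' + (x¹⁰ + x⁸ + x⁶ - (69/8)x⁴ + e·x²)ψ₂ = E₂ψ₂ for all real x. -/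

import Mathlib

private lemma hasDerivAt_of_eq {f g : ℝ → ℝ} {d d' : ℝ} {y : ℝ}
    (H : HasDerivAt f d y) (hfg : ∀ t, f t = g t) (hd : d = d') :
    HasDerivAt g d' y := by
  rw [← hd]; exact (funext hfg : f = g) ▸ H

theorem decatic_second_excited_state_example
    (A B e E₂ : ℝ)
    (hA : A = 1971 - 24 * Real.sqrt 6423)
    (hB : B = 1971 + 24 * Real.sqrt 6423)
    (he : e = (24 * A ^ ((1:ℝ)/3) - 8 * A ^ ((2:ℝ)/3)
          + 24 * B ^ ((1:ℝ)/3) - 8 * B ^ ((2:ℝ)/3) - 1551) / 576)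
    (hE : E₂ = (21 + 4 * A ^ ((1:ℝ)/3) + 4 * B ^ ((1:ℝ)/3)) / 24)
    (ψ : ℝ → ℝ)
    (hψ : ψ = fun x => (1 - ((8 * E₂ - 3) / 16) * x ^ 2)
          * Real.exp (-(1/6) * x ^ 6 - (1/8) * x ^ 4 - (3/16) * x ^ 2)) :
    ∀ x : ℝ, -(deriv (deriv ψ) x)
      + (x ^ 10 + x ^ 8 + x ^ 6 - (69/8) * x ^ 4 + e * x ^ 2) * ψ x
      = E₂ * ψ x := by
  intro x
  have hr0 : (0:ℝ) ≤ Real.sqrt 6423 := Real.sqrt_nonneg _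
  have hr2 : Real.sqrt 6423 ^ 2 = 6423 := Real.sq_sqrt (by norm_num)
  have hrle : Real.sqrt 6423 ≤ 81 := by nlinarith
  have hA0 : 0 ≤ A := by rw [hA]; nlinarith
  have hB0 : 0 ≤ B := by rw [hB]; nlinarith
  set u : ℝ := A ^ ((1:ℝ)/3) with hu
  set v : ℝ := B ^ ((1:ℝ)/3) with hv
  have hu0 : 0 ≤ u := Real.rpow_nonneg hA0 _
  have hv0 : 0 ≤ v := Real.rpow_nonneg hB0 _
  have hu3 : u ^ 3 = A := by
    rw [hu, ← Real.rpow_natCast (A ^ ((1:ℝ)/3)) 3, ← Real.rpow_mul hA0]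
    norm_num
  have hv3 : v ^ 3 = B := by
    rw [hv, ← Real.rpow_natCast (B ^ ((1:ℝ)/3)) 3, ← Real.rpow_mul hB0]
    norm_num
  have hA23 : A ^ ((2:ℝ)/3) = u ^ 2 := by
    rw [hu, ← Real.rpow_natCast (A ^ ((1:ℝ)/3)) 2, ← Real.rpow_mul hA0]
    norm_num
  have hB23 : B ^ ((2:ℝ)/3) = v ^ 2 := by
    rw [hv, ← Real.rpow_natCast (B ^ ((1:ℝ)/3)) 2, ← Real.rpow_mul hB0]
    norm_num
  have huv3 : (u * v) ^ 3 = 57 ^ 3 := by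
    rw [mul_pow, hu3, hv3, hA, hB]; nlinarith [hr2]
  have huv : u * v = 57 := by
    nlinarith [mul_nonneg hu0 hv0, sq_nonneg (u * v - 57), sq_nonneg (u * v + 57)]
  set s : ℝ := u + v with hsdef
  have hs : s ^ 3 = 171 * s + 3942 := by
    have hsum : A + B = 3942 := by rw [hA, hB]; ring
    have : s ^ 3 = u ^ 3 + v ^ 3 + 3 * (u * v) * s := by rw [hsdef]; ring
    rw [this, hu3, hv3, huv, hsum]; ring
  have hE2 : E₂ = (21 + 4 * s) / 24 := by rw [hE, hsdef]; ring
  have he2 : e = (24 * s - 8 * s ^ 2 - 639) / 576 := by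
    rw [he, hA23, hB23, hsdef]; linear_combination (1/36) * huv
  -- exponent derivative helper
  have hg : ∀ y : ℝ, HasDerivAt (fun t : ℝ => -(1/6) * t ^ 6 - (1/8) * t ^ 4 - (3/16) * t ^ 2)
      (-(y^5) - (1/2) * y^3 - (3/8) * y) y := by
    intro y
    exact hasDerivAt_of_eq
      ((((hasDerivAt_pow 6 y).const_mul (-(1/6):ℝ)).sub
        ((hasDerivAt_pow 4 y).const_mul ((1/8):ℝ))).sub
        ((hasDerivAt_pow 2 y).const_mul ((3/16):ℝ)))
      (fun t => by simp only [Pi.sub_apply, Pi.add_apply, Pi.mul_apply]) (by push_cast; ring)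
  set K : ℝ := (8 * E₂ - 3) / 16 with hK
  -- first derivative
  have hd1 : deriv ψ = fun y => (-2*K*y + (1 - K*y^2) * (-(y^5) - (1/2)*y^3 - (3/8)*y))
      * Real.exp (-(1/6) * y ^ 6 - (1/8) * y ^ 4 - (3/16) * y ^ 2) := by
    funext y
    have hP : HasDerivAt (fun t : ℝ => 1 - K * t ^ 2) (-2*K*y) y :=
      hasDerivAt_of_eq (((hasDerivAt_pow 2 y).const_mul K).const_sub 1)
        (fun t => by ring) (by push_cast; ring)
    have H := hP.mul (hg y).exp
    rw [hψ]
    refine HasDerivAt.deriv (hasDerivAt_of_eq H (fun t => by simp only [Pi.sub_apply, Pi.add_apply, Pi.mul_apply]) (by ring))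
  -- second derivative
  have hd2 : HasDerivAt (deriv ψ)
      ((( -2*K - 3/8) + 3*(3*K/8 - 1/2)*x^2 + 5*(K/2 - 1)*x^4 + 7*K*x^6
        + (-2*K*x + (1 - K*x^2) * (-(x^5) - (1/2)*x^3 - (3/8)*x))
          * (-(x^5) - (1/2) * x^3 - (3/8) * x))
        * Real.exp (-(1/6) * x ^ 6 - (1/8) * x ^ 4 - (3/16) * x ^ 2)) x := by
    rw [hd1]
    have hQ : HasDerivAt (fun t : ℝ => -2*K*t + (1 - K*t^2) * (-(t^5) - (1/2)*t^3 - (3/8)*t))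
        ((-2*K - 3/8) + 3*(3*K/8 - 1/2)*x^2 + 5*(K/2 - 1)*x^4 + 7*K*x^6) x :=
      hasDerivAt_of_eq
        (((hasDerivAt_id x).const_mul (-2*K - 3/8)).add
          (((hasDerivAt_pow 3 x).const_mul (3*K/8 - 1/2)).add
          (((hasDerivAt_pow 5 x).const_mul (K/2 - 1)).add
           ((hasDerivAt_pow 7 x).const_mul K))))
        (fun t => by simp only [id_eq, Pi.add_apply]; ring) (by push_cast; ring)
    exact hasDerivAt_of_eq (hQ.mul (hg x).exp) (fun t => by simp only [Pi.sub_apply, Pi.add_apply, Pi.mul_apply]) (by ring)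
  rw [hd2.deriv]
  simp only [hψ]
  rw [hK, hE2, he2]
  linear_combination (x^4/864) *
    Real.exp (-(1/6) * x ^ 6 - (1/8) * x ^ 4 - (3/16) * x ^ 2) * hs
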